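/- Let A be a finite set of size K and let (a_t)_{t=1}^T be a sequence in A, with T > K, such that the first K terms a_1,…,a_K enumerate all K elements of A (each element appears exactly once among the first K rounds). Then Σ_{t=K+1}^{T} 1 / (Σ_{j=1}^{t−1} 𝟙{a_t = a_j}) ≤ K + K·log(T/K). -/

import Mathlib

private lemma log_step (n : ℕ) (hn : 1 ≤ n) :
    (1:ℝ)/((n:ℝ)+1) ≤ Real.log ((n:ℝ)+1) - Real.log n := by
  have hn0 : (0:ℝ) < n := by exact_mod_cast hn
  have h1 : (0:ℝ) < (n:ℝ)+1 := by linarith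
  have h := Real.log_le_sub_one_of_pos (x := (n:ℝ)/((n:ℝ)+1)) (by positivity)
  rw [Real.log_div (by linarith) (by linarith)] at h
  have h2 : (n:ℝ)/((n:ℝ)+1) - 1 = -(1/((n:ℝ)+1)) := by field_simp; ring
  linarith

private lemma harmonic_le (n : ℕ) :
    ∑ i ∈ Finset.range n, (1:ℝ)/((i:ℝ)+1) ≤ 1 + Real.log n := by
  induction n with
  | zero => simp
  | succ n ih =>
    rw [Finset.sum_range_succ]
    rcases Nat.eq_zero_or_pos n with h0 | hpos
    · subst h0; simp
    · have hs := log_step n hpos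
      push_cast
      push_cast at ih hs
      linarith

private lemma rank_sum_eq : ∀ (n : ℕ) (s : Finset ℕ), s.card = n →
    ∑ t ∈ s, (1:ℝ)/(1 + (((s.filter (fun j => j < t)).card : ℝ)))
      = ∑ i ∈ Finset.range n, (1:ℝ)/((i:ℝ)+1)
  | 0, s, h => by rw [Finset.card_eq_zero.mp h]; simp
  | (n+1), s, h => by
    have hne : s.Nonempty := Finset.card_pos.mp (h ▸ n.succ_pos)
    set m := s.max' hne with hm
    have hmem : m ∈ s := s.max'_mem hne
    have hle : ∀ t ∈ s, t ≤ m := fun t ht => s.le_max' t ht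
    have hcard' : (s.erase m).card = n := by
      rw [Finset.card_erase_of_mem hmem, h]; rfl
    have hfm : s.filter (fun j => j < m) = s.erase m := by
      ext j
      simp only [Finset.mem_filter, Finset.mem_erase]
      constructor
      · rintro ⟨hj, hlt⟩; exact ⟨Nat.ne_of_lt hlt, hj⟩
      · rintro ⟨hne', hj⟩; exact ⟨hj, lt_of_le_of_ne (hle j hj) hne'⟩
    have hstep : ∀ t ∈ s.erase m,
        (1:ℝ)/(1 + (((s.filter (fun j => j < t)).card : ℝ)))
          = (1:ℝ)/(1 + ((((s.erase m).filter (fun j => j < t)).card : ℝ))) := by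
      intro t ht
      congr 3
      rw [Finset.filter_erase, Finset.erase_eq_of_notMem]
      simp only [Finset.mem_filter, not_and]
      intro _
      exact Nat.not_lt.mpr (hle t (Finset.mem_of_mem_erase ht))
    rw [← Finset.add_sum_erase s _ hmem, Finset.sum_range_succ,
        Finset.sum_congr rfl hstep, rank_sum_eq n (s.erase m) hcard', hfm, hcard']
    ring

theorem stmt2 {A : Type*} [Fintype A] [DecidableEq A] (K T : ℕ)
    (hK : Fintype.card A = K) (hT : K < T) (a : ℕ → A)
    (henum : Set.InjOn a (Set.Icc 1 K)) :
    ∑ t ∈ Finset.Icc (K + 1) T,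
        (1 : ℝ) / (∑ j ∈ Finset.Icc 1 (t - 1), if a t = a j then (1 : ℝ) else 0) ≤
      (K : ℝ) + (K : ℝ) * Real.log ((T : ℝ) / (K : ℝ)) := by
  classical
  have hKpos : 0 < K := hK ▸ (@Fintype.card_pos A _ ⟨a 0⟩)
  set s : A → Finset ℕ := fun x => (Finset.Icc (K+1) T).filter (fun j => a j = x) with hs
  have himg : (Finset.Icc 1 K).image a = Finset.univ := by
    apply Finset.eq_univ_of_card
    rw [Finset.card_image_of_injOn (by rw [Finset.coe_Icc]; exact henum),
        Nat.card_Icc, hK]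
    omega
  -- pointwise bound
  have hpt : ∀ t ∈ Finset.Icc (K+1) T,
      (1:ℝ) / (∑ j ∈ Finset.Icc 1 (t-1), if a t = a j then (1:ℝ) else 0)
        ≤ 1 / (1 + (((s (a t)).filter (fun j => j < t)).card : ℝ)) := by
    intro t ht
    obtain ⟨htK, htT⟩ := Finset.mem_Icc.mp ht
    have hden : (∑ j ∈ Finset.Icc 1 (t-1), if a t = a j then (1:ℝ) else 0)
        = (((Finset.Icc 1 (t-1)).filter (fun j => a t = a j)).card : ℝ) := by
      rw [Finset.sum_boole]
    obtain ⟨j0, hj0mem, hj0⟩ : ∃ j0 ∈ Finset.Icc 1 K, a j0 = a t := by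
      have hmem : a t ∈ (Finset.Icc 1 K).image a := himg ▸ Finset.mem_univ _
      obtain ⟨j0, hj0, he⟩ := Finset.mem_image.mp hmem
      exact ⟨j0, hj0, he⟩
    obtain ⟨hj01, hj02⟩ := Finset.mem_Icc.mp hj0mem
    have hsub : insert j0 ((s (a t)).filter (fun j => j < t))
        ⊆ (Finset.Icc 1 (t-1)).filter (fun j => a t = a j) := by
      intro j hj
      rcases Finset.mem_insert.mp hj with rfl | hj
      · exact Finset.mem_filter.mpr ⟨Finset.mem_Icc.mpr ⟨hj01, by omega⟩, hj0.symm⟩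
      · obtain ⟨hj1, hj4⟩ := Finset.mem_filter.mp hj
        obtain ⟨hj3, hj5⟩ := Finset.mem_filter.mp hj1
        obtain ⟨hj6, hj7⟩ := Finset.mem_Icc.mp hj3
        exact Finset.mem_filter.mpr ⟨Finset.mem_Icc.mpr ⟨by omega, by omega⟩, hj5.symm⟩
    have hnotmem : j0 ∉ (s (a t)).filter (fun j => j < t) := by
      intro hmem
      obtain ⟨h1, _⟩ := Finset.mem_filter.mp hmem
      obtain ⟨h2, _⟩ := Finset.mem_filter.mp h1
      have := (Finset.mem_Icc.mp h2).1
      omega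
    have hcard : ((s (a t)).filter (fun j => j < t)).card + 1
        ≤ ((Finset.Icc 1 (t-1)).filter (fun j => a t = a j)).card := by
      calc ((s (a t)).filter (fun j => j < t)).card + 1
          = (insert j0 ((s (a t)).filter (fun j => j < t))).card :=
            (Finset.card_insert_of_notMem hnotmem).symm
        _ ≤ _ := Finset.card_le_card hsub
    rw [hden]
    apply one_div_le_one_div_of_le (by positivity)
    have hc' : (((s (a t)).filter (fun j => j < t)).card : ℝ) + 1
        ≤ (((Finset.Icc 1 (t-1)).filter (fun j => a t = a j)).card : ℝ) := by
      exact_mod_cast hcard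
    linarith
  refine le_trans (Finset.sum_le_sum hpt) ?_
  rw [← Finset.sum_fiberwise (Finset.Icc (K+1) T) a
      (fun t => (1:ℝ)/(1 + (((s (a t)).filter (fun j => j < t)).card : ℝ)))]
  -- per-fiber bound
  have hfiber : ∀ x : A,
      ∑ t ∈ (Finset.Icc (K+1) T).filter (fun t => a t = x),
        (1:ℝ)/(1 + (((s (a t)).filter (fun j => j < t)).card : ℝ))
      ≤ 1 + Real.log ((max (s x).card 1 : ℕ) : ℝ) := by
    intro x
    have hcongr : ∑ t ∈ s x, (1:ℝ)/(1 + (((s (a t)).filter (fun j => j < t)).card : ℝ))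
        = ∑ t ∈ s x, (1:ℝ)/(1 + (((s x).filter (fun j => j < t)).card : ℝ)) := by
      apply Finset.sum_congr rfl
      intro t ht
      have : a t = x := (Finset.mem_filter.mp ht).2
      rw [this]
    rw [show (Finset.Icc (K+1) T).filter (fun t => a t = x) = s x from rfl, hcongr,
        rank_sum_eq (s x).card (s x) rfl]
    rcases Nat.eq_zero_or_pos (s x).card with h0 | hpos
    · rw [h0]; simp
    · have h1 : max (s x).card 1 = (s x).card := max_eq_left hpos
      rw [h1]; exact harmonic_le _
  refine le_trans (Finset.sum_le_sum (fun x _ => hfiber x)) ?_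
  rw [Finset.sum_add_distrib, Finset.sum_const, Finset.card_univ, hK, nsmul_eq_mul, mul_one]
  have hsum_n : ∑ x : A, (s x).card = T - K := by
    have h1 := Finset.card_eq_sum_card_fiberwise
      (f := a) (s := Finset.Icc (K+1) T) (t := Finset.univ) (fun x _ => Finset.mem_univ _)
    rw [Nat.card_Icc] at h1
    have h2 : ∑ x : A, (s x).card
        = ∑ x : A, ((Finset.Icc (K+1) T).filter (fun j => a j = x)).card := by
      simp only [hs]
    rw [h2, ← h1]
    omega
  set m : A → ℕ := fun x => max (s x).card 1 with hm
  have hm1 : ∀ x, 1 ≤ m x := fun x => le_max_right _ _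
  have hsum_m : ∑ x : A, m x ≤ T := by
    calc ∑ x : A, m x ≤ ∑ x : A, ((s x).card + 1) := by
          apply Finset.sum_le_sum; intro x _
          simp only [hm]; omega
      _ = (T - K) + K := by
          rw [Finset.sum_add_distrib, hsum_n, Finset.sum_const, Finset.card_univ, hK,
            smul_eq_mul, mul_one]
      _ = T := by omega
  have hKR : (0:ℝ) < K := by exact_mod_cast hKpos
  have hconc : ConcaveOn ℝ (Set.Ioi 0) Real.log := strictConcaveOn_log_Ioi.concaveOn
  have hw1 : ∑ _x : A, ((K:ℝ)⁻¹) = 1 := by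
    rw [Finset.sum_const, Finset.card_univ, hK, nsmul_eq_mul]
    field_simp
  have hjen := hconc.le_map_sum (t := Finset.univ) (w := fun _ : A => (K:ℝ)⁻¹)
      (p := fun x => (m x : ℝ)) (fun _ _ => by positivity) hw1
      (fun x _ => by
        have := hm1 x
        simp only [Set.mem_Ioi]
        exact_mod_cast Nat.lt_of_lt_of_le Nat.zero_lt_one this)
  simp only [smul_eq_mul] at hjen
  have hsum_m_R : ∑ x : A, ((K:ℝ)⁻¹ * (m x : ℝ)) = (∑ x : A, (m x:ℝ)) / K := by
    rw [← Finset.mul_sum]; ring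
  rw [hsum_m_R] at hjen
  have hlhs : ∑ x : A, ((K:ℝ)⁻¹ * Real.log (m x)) = (∑ x : A, Real.log (m x)) / K := by
    rw [← Finset.mul_sum]; ring
  rw [hlhs] at hjen
  have hsum_pos : (0:ℝ) < ∑ x : A, (m x:ℝ) := by
    have hle : (K:ℝ) ≤ ∑ x : A, (m x:ℝ) := by
      calc (K:ℝ) = ∑ _x : A, (1:ℝ) := by
            rw [Finset.sum_const, Finset.card_univ, hK, nsmul_eq_mul, mul_one]
        _ ≤ _ := Finset.sum_le_sum (fun x _ => by exact_mod_cast hm1 x)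
    linarith
  have hlog_le : Real.log ((∑ x : A, (m x:ℝ)) / K) ≤ Real.log ((T:ℝ)/K) := by
    apply Real.log_le_log (div_pos hsum_pos hKR)
    gcongr
    exact_mod_cast hsum_m
  have hfin : (∑ x : A, Real.log (m x)) / K ≤ Real.log ((T:ℝ)/K) :=
    le_trans hjen hlog_le
  have : ∑ x : A, Real.log (m x) ≤ (K:ℝ) * Real.log ((T:ℝ)/K) := by
    rw [div_le_iff₀ hKR] at hfin
    linarith [hfin]
  linarith [this]
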